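/- Let n = k² be a perfect square with n > 9, and let γ be an integer with √n ≤ γ ≤ n − √n such that γ divides n − √n; set α_γ := γ/(1 + γ). In the lollipop graph L_n, the price of fairness satisfies PoF(L_n, α_γ) > 1 − (1/√n + 2/(√n − 1)). -/

import Mathlib

open Finset

/-- Number of edges of `G` with both endpoints in `S`. -/
def edgesIn {V : Type*} [Fintype V] [DecidableEq V] (G : SimpleGraph V)
    [DecidableRel G.Adj] (S : Finset V) : ℕ :=
  (G.edgeFinset.filter (fun e => ∀ v ∈ e, v ∈ S)).card

/-- Density `ρ(S) = 2 e(S) / |S|` of the subgraph induced by `S`. -/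
noncomputable def rho {V : Type*} [Fintype V] [DecidableEq V] (G : SimpleGraph V)
    [DecidableRel G.Adj] (S : Finset V) : ℝ :=
  2 * (edgesIn G S : ℝ) / S.card

/-- Fairness regularizer `r1(S) = |S ∩ Sp| / |S|`. -/
noncomputable def r1 {V : Type*} [DecidableEq V] (Sp S : Finset V) : ℝ :=
  ((S ∩ Sp).card : ℝ) / S.card

/-- The lollipop graph `L_n` on `n = k²` vertices: vertices `0, …, k-1` form a
clique (the unprotected vertices), vertices `k, …, k²-1` form a path (the
protected vertices), and one endpoint of the path (vertex `k`) is joined to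
one vertex of the clique (vertex `k-1`). -/
def lollipop (k : ℕ) : SimpleGraph (Fin (k * k)) where
  Adj u v := u ≠ v ∧ ((u.val < k ∧ v.val < k) ∨
      (u.val + 1 = v.val ∧ k ≤ v.val) ∨ (v.val + 1 = u.val ∧ k ≤ u.val))
  symm := by
    constructor
    intro u v h
    refine ⟨Ne.symm h.1, ?_⟩
    rcases h.2 with h | h | h
    · exact Or.inl ⟨h.2, h.1⟩
    · exact Or.inr (Or.inr h)
    · exact Or.inr (Or.inl h)
  loopless := by constructor; intro v h; exact h.1 rfl

instance lollipopDecAdj (k : ℕ) : DecidableRel (lollipop k).Adj :=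
  fun _ _ => inferInstanceAs (Decidable (_ ∧ _))

/-- The protected subset of the lollipop graph: the vertices of the path. -/
def lollipopProtected (k : ℕ) : Finset (Fin (k * k)) :=
  Finset.univ.filter (fun v => k ≤ v.val)

/-- The vertex set of the clique `C_√n` in the lollipop graph. -/
def lollipopClique (k : ℕ) : Finset (Fin (k * k)) :=
  Finset.univ.filter (fun v => v.val < k)

/-- Density of the densest subgraph: `ρ*_G = max_{∅ ≠ S ⊆ V} ρ(S)`. -/
noncomputable def rhoStar {V : Type*} [Fintype V] [DecidableEq V] (G : SimpleGraph V)
    [DecidableRel G.Adj] : ℝ :=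
  sSup {x : ℝ | ∃ S : Finset V, S.Nonempty ∧ rho G S = x}

/-- Density of the densest subgraph at fairness level `α`:
`ρ*_G(α) = max {ρ(S) : ∅ ≠ S ⊆ V, r1(S) = α}`. -/
noncomputable def rhoStarAlpha {V : Type*} [Fintype V] [DecidableEq V] (G : SimpleGraph V)
    [DecidableRel G.Adj] (Sp : Finset V) (α : ℝ) : ℝ :=
  sSup {x : ℝ | ∃ S : Finset V, S.Nonempty ∧ r1 Sp S = α ∧ rho G S = x}

/-- Price of fairness `PoF(G, α) = 1 - ρ*_G(α) / ρ*_G`. -/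
noncomputable def PoF {V : Type*} [Fintype V] [DecidableEq V] (G : SimpleGraph V)
    [DecidableRel G.Adj] (Sp : Finset V) (α : ℝ) : ℝ :=
  1 - rhoStarAlpha G Sp α / rhoStar G

lemma two_mul_edgesIn {V : Type*} [Fintype V] [DecidableEq V] (G : SimpleGraph V)
    [DecidableRel G.Adj] (S : Finset V) :
    ((S ×ˢ S).filter fun p => G.Adj p.1 p.2).card = 2 * edgesIn G S := by
  classical
  have hmap : ∀ p ∈ (S ×ˢ S).filter (fun p => G.Adj p.1 p.2),
      Sym2.mk p.1 p.2 ∈ G.edgeFinset.filter (fun e => ∀ v ∈ e, v ∈ S) := by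
    rintro ⟨a, b⟩ hp
    simp only [Finset.mem_filter, Finset.mem_product] at hp
    simp only [Finset.mem_filter, SimpleGraph.mem_edgeFinset, SimpleGraph.mem_edgeSet]
    refine ⟨hp.2, ?_⟩
    intro v hv
    rw [Sym2.mem_iff] at hv
    rcases hv with rfl | rfl
    exacts [hp.1.1, hp.1.2]
  rw [edgesIn, Finset.card_eq_sum_card_fiberwise hmap]
  have hfib : ∀ e ∈ G.edgeFinset.filter (fun e => ∀ v ∈ e, v ∈ S),
      (((S ×ˢ S).filter fun p => G.Adj p.1 p.2).filter (fun p => Sym2.mk p.1 p.2 = e)).card = 2 := by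
    intro e he
    induction e using Sym2.ind with
    | _ a b =>
      simp only [Finset.mem_filter, SimpleGraph.mem_edgeFinset, SimpleGraph.mem_edgeSet] at he
      have hab : G.Adj a b := he.1
      have haS : a ∈ S := he.2 a (by simp)
      have hbS : b ∈ S := he.2 b (by simp)
      have hne : a ≠ b := hab.ne
      have heq : (((S ×ˢ S).filter fun p => G.Adj p.1 p.2).filter
          (fun p => Sym2.mk p.1 p.2 = s(a, b))) = {(a, b), (b, a)} := by
        ext ⟨x, y⟩
        simp only [Finset.mem_filter, Finset.mem_product, Finset.mem_insert,
          Finset.mem_singleton, Prod.mk.injEq, Sym2.eq_iff]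
        constructor
        · rintro ⟨-, (⟨rfl, rfl⟩ | ⟨rfl, rfl⟩)⟩
          · exact Or.inl ⟨rfl, rfl⟩
          · exact Or.inr ⟨rfl, rfl⟩
        · rintro (⟨rfl, rfl⟩ | ⟨rfl, rfl⟩)
          · exact ⟨⟨⟨haS, hbS⟩, hab⟩, Or.inl ⟨rfl, rfl⟩⟩
          · exact ⟨⟨⟨hbS, haS⟩, hab.symm⟩, Or.inr ⟨rfl, rfl⟩⟩
      rw [heq, Finset.card_insert_of_notMem, Finset.card_singleton]
      simp only [Finset.mem_singleton, Prod.mk.injEq, not_and]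
      intro h; exact absurd h hne
  rw [Finset.sum_congr rfl hfib, Finset.sum_const, smul_eq_mul, mul_comm]

lemma lollipopClique_card (k : ℕ) (hk : 0 < k) : (lollipopClique k).card = k := by
  have h : k ≤ k * k := Nat.le_mul_of_pos_left k hk
  have : lollipopClique k =
      (univ : Finset (Fin k)).map ⟨Fin.castLE h, Fin.castLE_injective h⟩ := by
    ext v
    simp only [lollipopClique, Finset.mem_filter, Finset.mem_univ, true_and,
      Finset.mem_map, Function.Embedding.coeFn_mk]
    constructor
    · intro hv; exact ⟨⟨v.val, hv⟩, by simp [Fin.ext_iff]⟩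
    · rintro ⟨i, rfl⟩; exact i.2
  rw [this, Finset.card_map, Finset.card_univ, Fintype.card_fin]

lemma lollipop_P_clique (k : ℕ) :
    ((lollipopClique k ×ˢ lollipopClique k).filter fun p => (lollipop k).Adj p.1 p.2)
      = (lollipopClique k).offDiag := by
  ext ⟨a, b⟩
  simp only [Finset.mem_filter, Finset.mem_product, Finset.mem_offDiag,
    lollipopClique, Finset.mem_univ, true_and]
  simp only [lollipop]
  constructor
  · rintro ⟨⟨ha, hb⟩, hne, -⟩
    exact ⟨ha, hb, hne⟩
  · rintro ⟨ha, hb, hne⟩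
    exact ⟨⟨ha, hb⟩, hne, Or.inl ⟨ha, hb⟩⟩

lemma lollipop_edge_bound (k : ℕ) (S : Finset (Fin (k * k))) :
    ((S ×ˢ S).filter fun p => (lollipop k).Adj p.1 p.2).card
      ≤ ((S \ lollipopProtected k).offDiag).card
        + 2 * (S ∩ lollipopProtected k).card := by
  classical
  set Q : Finset (Fin (k * k) × Fin (k * k)) :=
    (S ×ˢ S).filter (fun q => (q.1.val + 1 = q.2.val ∧ k ≤ q.2.val) ∨
      (q.2.val + 1 = q.1.val ∧ k ≤ q.1.val)) with hQ
  have hsub : ((S ×ˢ S).filter fun p => (lollipop k).Adj p.1 p.2)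
      ⊆ ((S \ lollipopProtected k).offDiag) ∪ Q := by
    rintro ⟨a, b⟩ hp
    simp only [Finset.mem_filter, Finset.mem_product] at hp
    simp only [lollipop] at hp
    obtain ⟨⟨ha, hb⟩, hne, hcases⟩ := hp
    rcases hcases with ⟨hak, hbk⟩ | h | h
    · apply Finset.mem_union_left
      simp only [Finset.mem_offDiag, Finset.mem_sdiff, lollipopProtected,
        Finset.mem_filter, Finset.mem_univ, true_and, not_le]
      exact ⟨⟨ha, hak⟩, ⟨hb, hbk⟩, hne⟩
    · exact Finset.mem_union_right _ (by
        simp only [hQ, Finset.mem_filter, Finset.mem_product]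
        exact ⟨⟨ha, hb⟩, Or.inl h⟩)
    · exact Finset.mem_union_right _ (by
        simp only [hQ, Finset.mem_filter, Finset.mem_product]
        exact ⟨⟨ha, hb⟩, Or.inr h⟩)
  have hQcard : Q.card ≤ 2 * (S ∩ lollipopProtected k).card := by
    have hinj : ∀ q ∈ Q, (fun q : Fin (k*k) × Fin (k*k) =>
        if q.1.val < q.2.val then (q.2, true) else (q.1, false)) q
        ∈ (S ∩ lollipopProtected k) ×ˢ (univ : Finset Bool) := by
      rintro ⟨a, b⟩ hq
      simp only [hQ, Finset.mem_filter, Finset.mem_product] at hq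
      obtain ⟨⟨ha, hb⟩, hcase⟩ := hq
      by_cases hab : a.val < b.val
      · simp only [hab, if_pos]
        rcases hcase with ⟨h1, h2⟩ | ⟨h1, h2⟩
        · simp only [Finset.mem_product, Finset.mem_inter, Finset.mem_univ, and_true,
            lollipopProtected, Finset.mem_filter, true_and]
          exact ⟨hb, h2⟩
        · omega
      · simp only [hab, if_neg, if_false]
        rcases hcase with ⟨h1, h2⟩ | ⟨h1, h2⟩
        · omega
        · simp only [Finset.mem_product, Finset.mem_inter, Finset.mem_univ, and_true,
            lollipopProtected, Finset.mem_filter, true_and]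
          exact ⟨ha, h2⟩
    have hinjOn : Set.InjOn (fun q : Fin (k*k) × Fin (k*k) =>
        if q.1.val < q.2.val then (q.2, true) else (q.1, false)) Q := by
      rintro ⟨a, b⟩ ha' ⟨c, d⟩ hc' heq
      simp only [hQ, Finset.coe_filter, Set.mem_setOf_eq, Finset.mem_product] at ha' hc'
      obtain ⟨-, hab⟩ := ha'
      obtain ⟨-, hcd⟩ := hc'
      by_cases h1 : a.val < b.val <;> by_cases h2 : c.val < d.val <;>
        simp only [h1, h2, if_pos, if_neg, if_false, Prod.mk.injEq] at heq
      · have hv : b.val = d.val := congrArg Fin.val heq.1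
        have hac : a.val = c.val := by
          rcases hab with ⟨hab1, -⟩ | ⟨hab1, -⟩ <;>
            rcases hcd with ⟨hcd1, -⟩ | ⟨hcd1, -⟩ <;> omega
        exact Prod.ext_iff.2 ⟨Fin.ext hac, heq.1⟩
      · exact absurd heq.2 (by decide)
      · exact absurd heq.2.symm (by decide)
      · have hv : a.val = c.val := congrArg Fin.val heq.1
        have hbd : b.val = d.val := by
          rcases hab with ⟨hab1, -⟩ | ⟨hab1, -⟩ <;>
            rcases hcd with ⟨hcd1, -⟩ | ⟨hcd1, -⟩ <;> omega
        exact Prod.ext_iff.2 ⟨heq.1, Fin.ext hbd⟩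
    calc Q.card ≤ ((S ∩ lollipopProtected k) ×ˢ (univ : Finset Bool)).card :=
          Finset.card_le_card_of_injOn _ hinj hinjOn
      _ = 2 * (S ∩ lollipopProtected k).card := by
          rw [Finset.card_product, Finset.card_univ]
          simp [mul_comm]
  calc ((S ×ˢ S).filter fun p => (lollipop k).Adj p.1 p.2).card
      ≤ (((S \ lollipopProtected k).offDiag) ∪ Q).card := Finset.card_le_card hsub
    _ ≤ ((S \ lollipopProtected k).offDiag).card + Q.card := Finset.card_union_le _ _
    _ ≤ _ := by omega


set_option maxHeartbeats 1000000 in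
/-- For a perfect square `n = k² > 9` and an integer `γ` with
`√n ≤ γ ≤ n - √n` dividing `n - √n`, letting `α_γ = γ/(1+γ)`, the price of
fairness of the lollipop graph satisfies
`PoF(L_n, α_γ) > 1 - (1/√n + 2/(√n - 1))`. -/
theorem stmt9 (k : ℕ) (hk : 2 ≤ k) (hn : 9 < k * k)
    (γ : ℕ) (hγ1 : k ≤ γ) (hγ2 : γ ≤ k * k - k) (hdvd : γ ∣ (k * k - k)) :
    1 - (1 / (k : ℝ) + 2 / ((k : ℝ) - 1)) <
      PoF (lollipop k) (lollipopProtected k) ((γ : ℝ) / (1 + γ)) := by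
  classical
  have hk0 : 0 < k := by omega
  have hk2' : (2:ℝ) ≤ (k:ℝ) := by exact_mod_cast hk
  have hkγ' : (k:ℝ) ≤ (γ:ℝ) := by exact_mod_cast hγ1
  -- clique density
  have hCC : (lollipopClique k).card = k := lollipopClique_card k hk0
  have hCne : (lollipopClique k).Nonempty := Finset.card_pos.1 (by rw [hCC]; omega)
  have h2e : 2 * edgesIn (lollipop k) (lollipopClique k) = k * k - k := by
    rw [← two_mul_edgesIn, lollipop_P_clique, Finset.offDiag_card, hCC]
  have hrhoC : rho (lollipop k) (lollipopClique k) = (k:ℝ) - 1 := by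
    rw [rho, hCC]
    have hkk : k ≤ k * k := Nat.le_mul_of_pos_left k hk0
    have h2e' : (2:ℝ) * (edgesIn (lollipop k) (lollipopClique k) : ℝ) = (k:ℝ) * k - k := by
      have h := congrArg (fun n : ℕ => (n : ℝ)) h2e
      push_cast [Nat.cast_sub hkk] at h
      linarith
    rw [h2e']
    have hkne : (k:ℝ) ≠ 0 := by positivity
    field_simp
  have hbdd : BddAbove {x : ℝ | ∃ S : Finset (Fin (k * k)), S.Nonempty ∧ rho (lollipop k) S = x} := by
    apply Set.Finite.bddAbove
    apply Set.Finite.subset (Set.finite_range (rho (lollipop k)))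
    rintro x ⟨S, -, rfl⟩
    exact ⟨S, rfl⟩
  have hRlb : (k:ℝ) - 1 ≤ rhoStar (lollipop k) := le_csSup hbdd ⟨_, hCne, hrhoC⟩
  have hR0 : (0:ℝ) < rhoStar (lollipop k) := lt_of_lt_of_le (by linarith) hRlb
  -- upper bound on rhoStarAlpha
  have hγ0 : (0:ℝ) < 1 + (γ:ℝ) := by positivity
  have hA : rhoStarAlpha (lollipop k) (lollipopProtected k) ((γ : ℝ) / (1 + γ))
      ≤ (3 * (k:ℝ) + 1) / ((k:ℝ) + 1) := by
    apply Real.sSup_le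
    · rintro x ⟨S, hSne, hr1, rfl⟩
      set p := (S ∩ lollipopProtected k).card with hp
      set m := (S \ lollipopProtected k).card with hm
      have hpm : p + m = S.card := Finset.card_inter_add_card_sdiff S (lollipopProtected k)
      have hScard : 0 < S.card := hSne.card_pos
      have hScard' : (0:ℝ) < (S.card : ℝ) := by exact_mod_cast hScard
      have hr1' : (p:ℝ) * (1 + γ) = (γ:ℝ) * S.card := by
        rw [r1] at hr1
        rw [div_eq_div_iff hScard'.ne' hγ0.ne'] at hr1
        exact hr1
      have hpr : (p:ℝ) = (γ:ℝ) * m := by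
        have hcast : (S.card : ℝ) = (p:ℝ) + (m:ℝ) := by exact_mod_cast hpm.symm
        rw [hcast] at hr1'
        nlinarith [hr1']
      have hpγm : p = γ * m := by exact_mod_cast hpr
      have hm1 : 1 ≤ m := by
        rcases Nat.eq_zero_or_pos m with h0 | h
        · rw [h0, Nat.mul_zero] at hpγm; omega
        · exact h
      have hmk : m ≤ k := by
        have hsub : S \ lollipopProtected k ⊆ lollipopClique k := by
          intro v hv
          rw [Finset.mem_sdiff] at hv
          simp only [lollipopProtected, Finset.mem_filter, Finset.mem_univ,
            true_and, not_le] at hv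
          simp only [lollipopClique, Finset.mem_filter, Finset.mem_univ, true_and]
          exact hv.2
        calc m ≤ (lollipopClique k).card := Finset.card_le_card hsub
          _ = k := hCC
      have hEB : 2 * edgesIn (lollipop k) S ≤ m * m - m + 2 * p := by
        rw [← two_mul_edgesIn]
        calc ((S ×ˢ S).filter fun q => (lollipop k).Adj q.1 q.2).card
            ≤ ((S \ lollipopProtected k).offDiag).card
              + 2 * (S ∩ lollipopProtected k).card := lollipop_edge_bound k S
          _ = m * m - m + 2 * p := by rw [Finset.offDiag_card]
      have hmm : m ≤ m * m := Nat.le_mul_of_pos_left m hm1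
      have hEBr : 2 * (edgesIn (lollipop k) S : ℝ) ≤ (m:ℝ) * m - m + 2 * p := by
        have h := (Nat.cast_le (α := ℝ)).2 hEB
        push_cast [Nat.cast_sub hmm] at h
        linarith
      have hm1' : (1:ℝ) ≤ (m:ℝ) := by exact_mod_cast hm1
      have hmk' : (m:ℝ) ≤ (k:ℝ) := by exact_mod_cast hmk
      have hcard' : (S.card : ℝ) = (m:ℝ) * (1 + γ) := by
        have h1 : S.card = γ * m + m := by omega
        rw [h1]; push_cast; ring
      rw [rho, hcard']
      have hmpos : (0:ℝ) < (m:ℝ) * (1 + γ) := by nlinarith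
      rw [div_le_div_iff₀ hmpos (by positivity)]
      have h1 : (0:ℝ) ≤ ((k:ℝ) + 1) * (m:ℝ) * ((k:ℝ) - (m:ℝ)) := by
        apply mul_nonneg (mul_nonneg (by linarith) (by linarith)) (by linarith)
      have h2 : (0:ℝ) ≤ ((γ:ℝ) - (k:ℝ)) * ((k:ℝ) - 1) * (m:ℝ) := by
        apply mul_nonneg (mul_nonneg (by linarith) (by linarith)) (by linarith)
      have h3 : (0:ℝ) ≤ (2 * (k:ℝ) + 2) * (m:ℝ) := by
        apply mul_nonneg (by linarith) (by linarith)
      have key : ((m:ℝ) * m - m + 2 * ((γ:ℝ) * m)) * ((k:ℝ) + 1)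
          ≤ (3 * (k:ℝ) + 1) * ((m:ℝ) * (1 + (γ:ℝ))) := by nlinarith [h1, h2, h3]
      calc 2 * (edgesIn (lollipop k) S : ℝ) * ((k:ℝ) + 1)
          ≤ ((m:ℝ) * m - m + 2 * (p:ℝ)) * ((k:ℝ) + 1) :=
            mul_le_mul_of_nonneg_right hEBr (by linarith)
        _ = ((m:ℝ) * m - m + 2 * ((γ:ℝ) * m)) * ((k:ℝ) + 1) := by rw [hpr]
        _ ≤ (3 * (k:ℝ) + 1) * ((m:ℝ) * (1 + (γ:ℝ))) := key
    · positivity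
  have hRα0 : 0 ≤ rhoStarAlpha (lollipop k) (lollipopProtected k) ((γ : ℝ) / (1 + γ)) := by
    apply Real.sSup_nonneg
    rintro x ⟨S, hSne, -, rfl⟩
    rw [rho]
    positivity
  rw [PoF]
  apply sub_lt_sub_left
  rw [div_lt_iff₀ hR0]
  have hcpos : (0:ℝ) ≤ 1 / (k:ℝ) + 2 / ((k:ℝ) - 1) := by
    have h1 : (0:ℝ) < (k:ℝ) - 1 := by linarith
    have h2 : (0:ℝ) < (k:ℝ) := by linarith
    positivity
  calc rhoStarAlpha (lollipop k) (lollipopProtected k) ((γ : ℝ) / (1 + γ))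
      ≤ (3 * (k:ℝ) + 1) / ((k:ℝ) + 1) := hA
    _ < (1 / (k:ℝ) + 2 / ((k:ℝ) - 1)) * ((k:ℝ) - 1) := by
        have h1 : (0:ℝ) < (k:ℝ) - 1 := by linarith
        have h2 : (0:ℝ) < (k:ℝ) := by linarith
        have h3 : (1 / (k:ℝ) + 2 / ((k:ℝ) - 1)) * ((k:ℝ) - 1) = (3 * (k:ℝ) - 1) / (k:ℝ) := by
          field_simp
          ring
        rw [h3, div_lt_div_iff₀ (by linarith) h2]
        nlinarith
    _ ≤ (1 / (k:ℝ) + 2 / ((k:ℝ) - 1)) * rhoStar (lollipop k) :=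
        mul_le_mul_of_nonneg_left hRlb hcpos
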